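/- arXiv:1508.02570 — 3 statements merged into one kernel-verified Lean document; each statement's English description precedes it below -/
import Mathlib

section
/- For every sequence X of length v over an alphabet of size m, writing v = qm + r with 0 ≤ r < m by division, the maximum out-of-phase Hamming autocorrelation satisfies H(X) ≥ (v−r)(v+r−m)/(m(v−1)). Here H(X) = max over 1 ≤ τ < v of H_{X,X}(τ), where H_{X,Y}(τ) = |{i ∈ {0,…,v−1} : x_i = y_{(i+τ) mod v}}|. -/
/-- Lempel–Greenberger bound I: for every sequence `X` of length `v` over an
alphabet of size `m`, with `r = v % m`, the maximum out-of-phase Hamming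
autocorrelation satisfies `H(X) ≥ (v-r)(v+r-m)/(m(v-1))`. -/
theorem stmt_0 (v m : ℕ) [NeZero v] (hv : 2 ≤ v) (hm : 1 ≤ m)
    (F : Type) [Fintype F] [DecidableEq F] (hF : Fintype.card F = m)
    (X : ZMod v → F) :
    ∃ τ : ZMod v, τ ≠ 0 ∧
      ((v : ℝ) - (v % m : ℕ)) * ((v : ℝ) + (v % m : ℕ) - m) / ((m : ℝ) * ((v : ℝ) - 1))
        ≤ ((Finset.univ.filter fun i : ZMod v => X i = X (i + τ)).card : ℝ) := by
  classical
  haveI : Fact (1 < v) := ⟨hv⟩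
  set r := v % m with hr
  set q := v / m with hq
  have hveq : v = q * m + r := by
    rw [hq, hr, Nat.mul_comm]; exact (Nat.div_add_mod v m).symm
  have hrm : r < m := Nat.mod_lt v hm
  set N : F → ℕ := fun f => (Finset.univ.filter fun i : ZMod v => X i = f).card with hN
  set H : ZMod v → ℕ := fun τ => (Finset.univ.filter fun i : ZMod v => X i = X (i + τ)).card with hH
  have hcardZ : Fintype.card (ZMod v) = v := ZMod.card v
  have hsumN : ∑ f, N f = v := by
    rw [← hcardZ, ← Finset.card_univ,
      Finset.card_eq_sum_card_fiberwise (f := X) (t := Finset.univ) (fun x _ => Finset.mem_univ _)]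
  -- sum of correlations over all shifts
  have hsumH : ∑ τ : ZMod v, H τ = ∑ f, N f * N f := by
    have step1 : ∀ i : ZMod v, (Finset.univ.filter fun τ : ZMod v => X i = X (i + τ)).card = N (X i) := by
      intro i
      simp only [hN]
      apply Finset.card_bij (fun τ _ => i + τ)
      · intro τ hτ
        simp only [Finset.mem_filter, Finset.mem_univ, true_and] at hτ ⊢
        exact hτ.symm
      · intro a ha b hb h
        exact add_left_cancel h
      · intro j hj
        refine ⟨j - i, ?_, by ring⟩
        simp only [Finset.mem_filter, Finset.mem_univ, true_and] at hj ⊢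
        rw [show i + (j - i) = j by ring]
        exact hj.symm
    calc ∑ τ : ZMod v, H τ
        = ∑ τ : ZMod v, ∑ i : ZMod v, if X i = X (i + τ) then 1 else 0 := by
          refine Finset.sum_congr rfl fun τ _ => ?_
          exact Finset.card_filter _ _
      _ = ∑ i : ZMod v, ∑ τ : ZMod v, if X i = X (i + τ) then 1 else 0 := Finset.sum_comm
      _ = ∑ i : ZMod v, N (X i) := by
          refine Finset.sum_congr rfl fun i _ => ?_
          rw [← step1 i, Finset.card_filter]
      _ = ∑ f, ∑ i ∈ Finset.univ.filter (fun i => X i = f), N (X i) :=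
          (Finset.sum_fiberwise _ _ _).symm
      _ = ∑ f, N f * N f := by
          refine Finset.sum_congr rfl fun f _ => ?_
          have hconst : ∀ i ∈ Finset.univ.filter (fun i => X i = f), N (X i) = N f := by
            intro i hi
            simp only [Finset.mem_filter] at hi
            rw [hi.2]
          rw [Finset.sum_congr rfl hconst, Finset.sum_const, smul_eq_mul]
  -- integer convexity bound
  have hconv : ((2 * q + 1) * v : ℤ) - q * (q + 1) * m ≤ ∑ f, (N f : ℤ) * N f := by
    have key : (0 : ℤ) ≤ ∑ f, ((N f : ℤ) - q) * ((N f : ℤ) - q - 1) := by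
      apply Finset.sum_nonneg
      intro f _
      rcases le_or_gt ((N f : ℤ)) q with h | h
      · have h1 : (N f : ℤ) - q ≤ 0 := by linarith
        have h2 : (N f : ℤ) - q - 1 ≤ 0 := by linarith
        nlinarith
      · have h1 : (0:ℤ) ≤ (N f : ℤ) - q := by linarith
        have h2 : (0:ℤ) ≤ (N f : ℤ) - q - 1 := by linarith
        exact mul_nonneg h1 h2
    have expand : ∑ f, ((N f : ℤ) - q) * ((N f : ℤ) - q - 1)
        = ∑ f, (N f : ℤ) * N f - (2 * q + 1) * v + q * (q + 1) * m := by
      have hs : ∑ f, (N f : ℤ) = v := by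
        rw [← Nat.cast_sum, hsumN]
      calc ∑ f, ((N f : ℤ) - q) * ((N f : ℤ) - q - 1)
          = ∑ f, ((N f : ℤ) * N f - (2 * q + 1) * (N f : ℤ) + q * (q + 1)) := by
            refine Finset.sum_congr rfl fun f _ => ?_; ring
        _ = ∑ f, (N f : ℤ) * N f - (2 * q + 1) * ∑ f, (N f : ℤ)
              + (Fintype.card F : ℤ) * (q * (q + 1)) := by
            rw [Finset.sum_add_distrib, Finset.sum_sub_distrib, Finset.mul_sum,
              Finset.sum_const, Finset.card_univ, nsmul_eq_mul]
        _ = _ := by rw [hs, hF]; ring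
    linarith [key, expand ▸ key]
  -- pigeonhole over nonzero shifts
  set s : Finset (ZMod v) := ({0} : Finset (ZMod v))ᶜ with hs
  have hsne : s.Nonempty := ⟨1, by simp [hs]⟩
  obtain ⟨τ, hτs, hτmax⟩ := Finset.exists_max_image s H hsne
  have hτ0 : τ ≠ 0 := by simpa [hs] using hτs
  have hscard : s.card = v - 1 := by
    rw [hs, Finset.card_compl, Finset.card_singleton, hcardZ]
  have hH0 : H 0 = v := by
    simp [hH, hcardZ]
  have hsum_s : ∑ f, N f * N f - v = ∑ τ' ∈ s, H τ' := by
    have : H 0 + ∑ τ' ∈ s, H τ' = ∑ τ' : ZMod v, H τ' := by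
      rw [hs, ← Finset.sum_singleton (f := H) (a := (0 : ZMod v)),
        Finset.sum_add_sum_compl]
    omega
  have hbound : ∑ τ' ∈ s, H τ' ≤ (v - 1) * H τ := by
    calc ∑ τ' ∈ s, H τ' ≤ s.card * H τ := by
          rw [← smul_eq_mul]
          exact Finset.sum_le_card_nsmul s H (H τ) hτmax
      _ = (v - 1) * H τ := by rw [hscard]
  -- combine in ℤ
  have hZ : ((v : ℤ) - 1) * H τ ≥ (2 * q : ℤ) * v - q * (q + 1) * m := by
    have h1 : ((∑ f, N f * N f : ℕ) : ℤ) - v ≤ ((v - 1) * H τ : ℕ) := by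
      have := hsum_s.symm ▸ hbound
      have h2 : ∑ f, N f * N f - v ≤ (v - 1) * H τ := by omega
      have hvle : v ≤ ∑ f, N f * N f := by
        have : H 0 + ∑ τ' ∈ s, H τ' = ∑ τ' : ZMod v, H τ' := by
          rw [hs, ← Finset.sum_singleton (f := H) (a := (0 : ZMod v)),
            Finset.sum_add_sum_compl]
        omega
      push_cast [Nat.cast_sub hvle]
      exact_mod_cast Nat.cast_le.mpr h2
    have h3 : ((∑ f, N f * N f : ℕ) : ℤ) = ∑ f, (N f : ℤ) * N f := by push_cast; rfl
    have h4 : (((v - 1) * H τ : ℕ) : ℤ) = ((v : ℤ) - 1) * H τ := by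
      have : (1:ℕ) ≤ v := by omega
      push_cast [Nat.cast_sub this]
      ring
    rw [h3] at h1
    rw [h4] at h1
    linarith [hconv]
  -- final real arithmetic
  refine ⟨τ, hτ0, ?_⟩
  have hm0 : (0:ℝ) < m := by exact_mod_cast hm
  have hv1 : (0:ℝ) < (v:ℝ) - 1 := by
    have : (2:ℝ) ≤ v := by exact_mod_cast hv
    linarith
  rw [div_le_iff₀ (by positivity)]
  have hZR : ((2 * q : ℝ) * v - q * (q + 1) * m) ≤ ((v : ℝ) - 1) * H τ := by
    exact_mod_cast hZ
  have hveqR : (v : ℝ) = q * m + r := by exact_mod_cast hveq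
  have hHτ : (H τ : ℝ) = ((Finset.univ.filter fun i : ZMod v => X i = X (i + τ)).card : ℝ) := rfl
  rw [← hHτ]
  nlinarith [mul_le_mul_of_nonneg_left hZR (le_of_lt hm0), sq_nonneg ((q:ℝ)*m - r), hm0]
end

section
/- Let S be a set of k sequences of length v over an alphabet of size m, and let I = ⌊vk/m⌋. Then the maximum Hamming correlation of S satisfies H_m(S) ≥ ⌈(2Ivk − (I+1)Im) / ((vk−1)k)⌉, where H_m(S) is the maximum over all out-of-phase autocorrelations H_{X,X}(τ) (1 ≤ τ < v, X ∈ S) and all cross-correlations H_{X,Y}(τ) (0 ≤ τ < v, X ≠ Y in S). -/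
/-- Peng–Fan bound: for a set `S` of `k` sequences of length `v` over an alphabet
of size `m`, with `I = ⌊vk/m⌋`, the maximum Hamming correlation satisfies
`H_m(S) ≥ ⌈(2Ivk - (I+1)Im)/((vk-1)k)⌉`. -/
theorem stmt_1 (v k m : ℕ) [NeZero v] (hv : 2 ≤ v) (hk : 1 ≤ k) (hm : 1 ≤ m)
    (F : Type) [Fintype F] [DecidableEq F] (hF : Fintype.card F = m)
    (S : Finset (ZMod v → F)) (hS : S.card = k) :
    ∃ X ∈ S, ∃ Y ∈ S, ∃ τ : ZMod v, (X ≠ Y ∨ τ ≠ 0) ∧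
      (⌈((2 * (v * k / m : ℕ) * v * k : ℚ) - (((v * k / m : ℕ) + 1) * (v * k / m : ℕ) * m : ℚ))
          / (((v * k : ℚ) - 1) * k)⌉ : ℤ)
        ≤ ((Finset.univ.filter fun i : ZMod v => X i = Y (i + τ)).card : ℤ) := by
  classical
  haveI : Fact (1 < v) := ⟨hv⟩
  set H : (ZMod v → F) → (ZMod v → F) → ZMod v → ℕ :=
    fun X Y τ => (Finset.univ.filter fun i : ZMod v => X i = Y (i + τ)).card with hHdef
  set a : (ZMod v → F) → F → ℕ :=
    fun X f => ∑ i : ZMod v, if X i = f then 1 else 0 with hadef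
  set n : F → ℕ := fun f => ∑ X ∈ S, a X f with hndef
  -- per-pair correlation sum
  have L1 : ∀ X Y : ZMod v → F, (∑ τ : ZMod v, H X Y τ) = ∑ f : F, a X f * a Y f := by
    intro X Y
    calc (∑ τ : ZMod v, H X Y τ)
        = ∑ τ : ZMod v, ∑ i : ZMod v, if X i = Y (i + τ) then 1 else 0 :=
          Finset.sum_congr rfl fun τ _ => Finset.card_filter _ _
      _ = ∑ i : ZMod v, ∑ τ : ZMod v, if X i = Y (i + τ) then 1 else 0 := Finset.sum_comm
      _ = ∑ i : ZMod v, ∑ j : ZMod v, if X i = Y j then 1 else 0 := by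
          refine Finset.sum_congr rfl fun i _ => ?_
          exact Equiv.sum_comp (Equiv.addLeft i) (fun j => if X i = Y j then 1 else 0)
      _ = ∑ i : ZMod v, ∑ j : ZMod v, ∑ f : F,
            (if X i = f then 1 else 0) * (if Y j = f then 1 else 0) := by
          refine Finset.sum_congr rfl fun i _ => Finset.sum_congr rfl fun j _ => ?_
          by_cases h : X i = Y j
          · simp [h, mul_ite, mul_one, mul_zero, Finset.sum_ite_eq]
          · rw [if_neg h]
            refine (Finset.sum_eq_zero fun f _ => ?_).symm
            by_cases h1 : X i = f <;> by_cases h2 : Y j = f <;> simp_all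
      _ = ∑ i : ZMod v, ∑ f : F, ∑ j : ZMod v,
            (if X i = f then 1 else 0) * (if Y j = f then 1 else 0) :=
          Finset.sum_congr rfl fun i _ => Finset.sum_comm
      _ = ∑ f : F, ∑ i : ZMod v, ∑ j : ZMod v,
            (if X i = f then 1 else 0) * (if Y j = f then 1 else 0) := Finset.sum_comm
      _ = ∑ f : F, a X f * a Y f := by
          refine Finset.sum_congr rfl fun f _ => ?_
          rw [hadef, ← Finset.sum_mul_sum]
  have L2 : ∀ X : ZMod v → F, ∑ f : F, a X f = v := by
    intro X
    have h1 : ∑ f : F, a X f = ∑ i : ZMod v, ∑ f : F, if X i = f then 1 else 0 :=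
      Finset.sum_comm
    rw [h1]
    simp [Finset.sum_ite_eq, ZMod.card]
  have key : (∑ X ∈ S, ∑ Y ∈ S, ∑ τ : ZMod v, H X Y τ) = ∑ f : F, n f * n f := by
    simp only [L1]
    calc (∑ X ∈ S, ∑ Y ∈ S, ∑ f : F, a X f * a Y f)
        = ∑ X ∈ S, ∑ f : F, ∑ Y ∈ S, a X f * a Y f :=
          Finset.sum_congr rfl fun X _ => Finset.sum_comm
      _ = ∑ f : F, ∑ X ∈ S, ∑ Y ∈ S, a X f * a Y f := Finset.sum_comm
      _ = ∑ f : F, n f * n f := by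
          refine Finset.sum_congr rfl fun f _ => ?_
          rw [hndef, ← Finset.sum_mul_sum]
  have nsum : ∑ f : F, n f = v * k := by
    have h1 : ∑ f : F, n f = ∑ X ∈ S, ∑ f : F, a X f := Finset.sum_comm
    rw [h1]
    simp [L2, hS, mul_comm]
  set I : ℕ := v * k / m with hIdef
  have Isq : ∀ f : F, (2 * (I:ℤ) + 1) * (n f : ℤ) - I * (I + 1) ≤ (n f : ℤ) ^ 2 := by
    intro f
    rcases le_or_gt ((n f : ℤ)) I with h | h
    · nlinarith
    · nlinarith
  have sumsq : (2 * (I:ℤ) + 1) * (v * k) - (I:ℤ) * (I + 1) * m ≤ ∑ f : F, (n f : ℤ) ^ 2 := by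
    have h1 := Finset.sum_le_sum (fun f (_ : f ∈ Finset.univ) => Isq f)
    have h2 : ∑ f : F, ((2 * (I:ℤ) + 1) * (n f : ℤ) - I * (I + 1))
        = (2 * (I:ℤ) + 1) * (v * k) - (I:ℤ) * (I + 1) * m := by
      rw [Finset.sum_sub_distrib, ← Finset.mul_sum, Finset.sum_const, Finset.card_univ, hF]
      have : ∑ f : F, (n f : ℤ) = ((v * k : ℕ) : ℤ) := by
        rw [← Nat.cast_sum, nsum]
      rw [this]
      push_cast
      ring
    rw [h2] at h1
    exact h1
  -- diagonal
  have diag : ∀ X : ZMod v → F, H X X 0 = v := by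
    intro X
    simp [hHdef, ZMod.card]
  -- the set of off-diagonal triples
  set P : Finset (((ZMod v → F) × (ZMod v → F)) × ZMod v) :=
    (S ×ˢ S) ×ˢ (Finset.univ : Finset (ZMod v)) with hPdef
  set T : Finset (((ZMod v → F) × (ZMod v → F)) × ZMod v) :=
    P.filter (fun t => t.1.1 ≠ t.1.2 ∨ t.2 ≠ 0) with hTdef
  have hfilneg : P.filter (fun t => ¬(t.1.1 ≠ t.1.2 ∨ t.2 ≠ 0))
      = S.image (fun X => ((X, X), (0 : ZMod v))) := by
    ext t
    obtain ⟨⟨x, y⟩, τ⟩ := t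
    simp only [Finset.mem_filter, hPdef, Finset.mem_product, Finset.mem_univ, and_true,
      Finset.mem_image, not_or, not_not]
    constructor
    · rintro ⟨⟨hx, hy⟩, rfl, rfl⟩
      exact ⟨x, hx, rfl⟩
    · rintro ⟨X, hX, h⟩
      obtain ⟨h1, h2⟩ := Prod.mk.injEq .. ▸ h
      obtain ⟨rfl, rfl⟩ := Prod.mk.injEq .. ▸ h1
      exact ⟨⟨hX, hX⟩, rfl, h2.symm ▸ rfl⟩
  have hinj : Function.Injective (fun X : ZMod v → F => ((X, X), (0 : ZMod v))) := by
    intro X Y h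
    simpa using congrArg (fun t => t.1.1) h
  have hPcard : P.card = k * k * v := by
    simp [hPdef, hS, ZMod.card, mul_assoc]
  have hTcard : T.card + k = k * k * v := by
    have := Finset.card_filter_add_card_filter_not
      (s := P) (p := fun t => t.1.1 ≠ t.1.2 ∨ t.2 ≠ 0)
    rw [hfilneg, Finset.card_image_of_injective _ hinj, hS, hPcard] at this
    exact this
  -- sum over T
  have hsumP : ∑ t ∈ P, H t.1.1 t.1.2 t.2 = ∑ X ∈ S, ∑ Y ∈ S, ∑ τ : ZMod v, H X Y τ := by
    rw [hPdef, Finset.sum_product, Finset.sum_product]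
  have hsplit : (∑ t ∈ T, H t.1.1 t.1.2 t.2) + k * v
      = ∑ X ∈ S, ∑ Y ∈ S, ∑ τ : ZMod v, H X Y τ := by
    rw [← hsumP, ← Finset.sum_filter_add_sum_filter_not P
      (fun t => t.1.1 ≠ t.1.2 ∨ t.2 ≠ 0) (fun t => H t.1.1 t.1.2 t.2)]
    congr 1
    rw [hfilneg, Finset.sum_image (fun x _ y _ h => hinj h)]
    simp [diag, hS, mul_comm]
  -- lower bound on the sum over T, in ℤ
  have hcast : ∑ t ∈ T, (H t.1.1 t.1.2 t.2 : ℤ) = ((∑ t ∈ T, H t.1.1 t.1.2 t.2 : ℕ) : ℤ) :=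
    (Nat.cast_sum _ _).symm
  have hTsum : 2 * (I:ℤ) * (v * k) - (I:ℤ) * (I + 1) * m
      ≤ ∑ t ∈ T, (H t.1.1 t.1.2 t.2 : ℤ) := by
    have h1 : ((∑ t ∈ T, H t.1.1 t.1.2 t.2 : ℕ) : ℤ) + ((k*v : ℕ) : ℤ)
        = ∑ f : F, (n f : ℤ) ^ 2 := by
      rw [← Nat.cast_add, hsplit.trans key, Nat.cast_sum]
      exact Finset.sum_congr rfl fun f _ => by push_cast; ring
    rw [hcast]
    push_cast at h1
    linarith [sumsq]
  -- nonemptiness of T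
  obtain ⟨X0, hX0⟩ : S.Nonempty := Finset.card_pos.mp (hS ▸ hk)
  have hTne : T.Nonempty := by
    refine ⟨((X0, X0), 1), ?_⟩
    rw [hTdef, Finset.mem_filter, hPdef]
    refine ⟨Finset.mem_product.mpr ⟨Finset.mem_product.mpr ⟨hX0, hX0⟩, Finset.mem_univ _⟩, ?_⟩
    exact Or.inr one_ne_zero
  set c : ℚ := ((2 * (I:ℚ) * v * k) - ((I:ℚ) + 1) * I * m) / (((v:ℚ) * k - 1) * k)
    with hcdef
  have hk' : (1:ℚ) ≤ (k:ℚ) := by exact_mod_cast hk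
  have hv' : (2:ℚ) ≤ (v:ℚ) := by exact_mod_cast hv
  have h2k : (2:ℚ) * k ≤ (v:ℚ) * k :=
    mul_le_mul_of_nonneg_right hv' (by linarith)
  have hden : (0:ℚ) < ((v:ℚ) * k - 1) * k := by nlinarith
  have hcount : (T.card : ℚ) = ((v:ℚ) * k - 1) * k := by
    have h1 : ((T.card : ℚ)) + k = k * k * v := by exact_mod_cast congrArg (Nat.cast : ℕ → ℚ) hTcard
    nlinarith [h1]
  have hQ : ((v:ℚ) * k - 1) * k * c ≤ ∑ t ∈ T, (H t.1.1 t.1.2 t.2 : ℚ) := by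
    have h1 : ((v:ℚ) * k - 1) * k * c
        = (2 * (I:ℚ) * v * k) - ((I:ℚ) + 1) * I * m := by
      rw [hcdef, mul_div_cancel₀ _ hden.ne']
    rw [h1]
    have h3 := hTsum
    rw [hcast] at h3
    have h4 := (Int.cast_le (R := ℚ)).mpr h3
    have h5 : ∑ t ∈ T, (H t.1.1 t.1.2 t.2 : ℚ) = ((∑ t ∈ T, H t.1.1 t.1.2 t.2 : ℕ) : ℚ) :=
      (Nat.cast_sum _ _).symm
    rw [h5]
    push_cast at h4 ⊢
    linarith
  have hsum_le : ∑ _t ∈ T, c ≤ ∑ t ∈ T, (H t.1.1 t.1.2 t.2 : ℚ) := by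
    rw [Finset.sum_const, nsmul_eq_mul, hcount]
    exact hQ
  obtain ⟨t, htT, hct⟩ := Finset.exists_le_of_sum_le hTne hsum_le
  obtain ⟨⟨X, Y⟩, τ⟩ := t
  rw [hTdef, Finset.mem_filter, hPdef, Finset.mem_product] at htT
  obtain ⟨⟨hXY, -⟩, hcond⟩ := htT
  obtain ⟨hXS, hYS⟩ := Finset.mem_product.mp hXY
  refine ⟨X, hXS, Y, hYS, τ, hcond, ?_⟩
  rw [Int.ceil_le]
  have hgoal : ((Finset.univ.filter fun i : ZMod v => X i = Y (i + τ)).card : ℚ)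
      = (H X Y τ : ℚ) := rfl
  push_cast
  rw [hgoal]
  refine le_trans (le_of_eq ?_) hct
  rw [hcdef]
  try push_cast
  try ring
end

section
/- Suppose S is a code of length v over an alphabet of size m with minimum Hamming distance d satisfying d > v(1 − 1/w²) for some integer w ≥ 1. Then S is a (w, 1 − 1/w)-cover-free code: for every subset S' ⊆ S of size w and every codeword Z ∈ S \ S', the set I(Z,S') = {i : z_i = y_i for some Y ∈ S'} satisfies |I(Z,S')| < v/w. -/
/-- A code with minimum distance `d > v(1 - 1/w²)` is a `(w, 1 - 1/w)`-cover-free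
code: any codeword agrees with some member of any `w`-subset in fewer than `v/w`
coordinates. -/
theorem stmt_3 (v w d : ℕ) (hv : 1 ≤ v) (hw : 1 ≤ w) (F : Type) [DecidableEq F]
    (S : Finset (Fin v → F))
    (hd : ∀ X ∈ S, ∀ Y ∈ S, X ≠ Y →
        d ≤ (Finset.univ.filter fun i : Fin v => X i ≠ Y i).card)
    (hdv : (v : ℝ) * (1 - 1 / (w : ℝ) ^ 2) < d) :
    ∀ S' ⊆ S, S'.card = w → ∀ Z ∈ S \ S',
      ((Finset.univ.filter fun i : Fin v => ∃ Y ∈ S', Z i = Y i).card : ℝ) < (v : ℝ) / w := by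
  intro S' hS' hcard Z hZ
  rw [Finset.mem_sdiff] at hZ
  obtain ⟨hZS, hZnot⟩ := hZ
  have hw0 : (0:ℝ) < w := by positivity
  have hsub : (Finset.univ.filter fun i : Fin v => ∃ Y ∈ S', Z i = Y i)
      ⊆ S'.biUnion (fun Y => Finset.univ.filter fun i : Fin v => Z i = Y i) := by
    intro i hi
    simp only [Finset.mem_filter, Finset.mem_univ, true_and] at hi
    obtain ⟨Y, hY, hZY⟩ := hi
    exact Finset.mem_biUnion.mpr ⟨Y, hY, by simp [hZY]⟩
  have key : ∀ Y ∈ S', ((Finset.univ.filter fun i : Fin v => Z i = Y i).card : ℝ)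
      < (v : ℝ) / (w : ℝ) ^ 2 := by
    intro Y hY
    have hne : Z ≠ Y := fun h => hZnot (h ▸ hY)
    have hd' := hd Z hZS Y (hS' hY) hne
    have hpart : (Finset.univ.filter fun i : Fin v => Z i = Y i).card
        + (Finset.univ.filter fun i : Fin v => ¬ (Z i = Y i)).card = v := by
      rw [Finset.card_filter_add_card_filter_not]
      simp
    have hd'' : (d : ℝ) ≤ ((Finset.univ.filter fun i : Fin v => ¬ (Z i = Y i)).card : ℝ) := by
      exact_mod_cast hd'
    have hpart' : ((Finset.univ.filter fun i : Fin v => Z i = Y i).card : ℝ)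
        + ((Finset.univ.filter fun i : Fin v => ¬ (Z i = Y i)).card : ℝ) = v := by
      exact_mod_cast hpart
    have hw2 : (0:ℝ) < (w:ℝ)^2 := by positivity
    rw [lt_div_iff₀ hw2]
    have hcancel : (1/(w:ℝ)^2) * (w:ℝ)^2 = 1 := by field_simp
    nlinarith [hd'', hpart', hcancel, mul_lt_mul_of_pos_right hdv hw2]
  have hne' : S'.Nonempty := Finset.card_pos.mp (by omega)
  have hsum : (∑ Y ∈ S', ((Finset.univ.filter fun i : Fin v => Z i = Y i).card : ℝ))
      < ∑ _Y ∈ S', (v : ℝ) / (w : ℝ) ^ 2 :=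
    Finset.sum_lt_sum_of_nonempty hne' key
  have hsum' : ∑ _Y ∈ S', (v : ℝ) / (w : ℝ) ^ 2 = (v : ℝ) / w := by
    rw [Finset.sum_const, hcard, nsmul_eq_mul]
    field_simp
  calc ((Finset.univ.filter fun i : Fin v => ∃ Y ∈ S', Z i = Y i).card : ℝ)
      ≤ ((S'.biUnion (fun Y => Finset.univ.filter fun i : Fin v => Z i = Y i)).card : ℝ) := by
        exact_mod_cast Finset.card_le_card hsub
    _ ≤ ∑ Y ∈ S', ((Finset.univ.filter fun i : Fin v => Z i = Y i).card : ℝ) := by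
        exact_mod_cast Finset.card_biUnion_le
    _ < (v : ℝ) / w := by rw [← hsum']; exact hsum
end
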